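/- Let N ≥ 1, let S ⊆ ℝ^N be compact, let h ∈ B_S, let D_1, …, D_M ⊆ ℝ^N be measurable sets, and let ω_1, …, ω_M ∈ (0,1] with ω_1 + ⋯ + ω_M = 1. Then the operator T_h f = Σ_{m=1}^M ω_m P_S(f + χ_{D_m}(h − f)) is firmly nonexpansive on B_S: for all f, g ∈ B_S, ‖T_h f − T_h g‖² ≤ ⟨f − g, T_h f − T_h g⟩. -/

import Mathlib

open MeasureTheory FourierTransform Filter

noncomputable section

/-- The Hilbert space `L²(ℝᴺ; ℂ)` of square-integrable functions on `ℝᴺ`. -/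
abbrev L2Space (N : ℕ) : Type :=
  Lp ℂ 2 (volume : Measure (EuclideanSpace ℝ (Fin N)))

/-- `f ∈ L²(ℝᴺ)` is bandlimited to `S`: its Fourier transform vanishes (a.e.) outside `S`;
equivalently, `f` agrees a.e. with the inverse Fourier transform of an integrable function `F`
vanishing outside `S`. -/
def IsBandlimited {N : ℕ} (S : Set (EuclideanSpace ℝ (Fin N))) (f : L2Space N) : Prop :=
  ∃ F : EuclideanSpace ℝ (Fin N) → ℂ,
    Integrable F ∧ (∀ k, k ∉ S → F k = 0) ∧
      (f : EuclideanSpace ℝ (Fin N) → ℂ) =ᵐ[volume] 𝓕⁻ F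

/-- Multiplication of `f ∈ L²` by the indicator function `χ_D`, as an element of `L²`. -/
def chiMul {N : ℕ} {D : Set (EuclideanSpace ℝ (Fin N))} (hD : MeasurableSet D)
    (f : L2Space N) : L2Space N :=
  ((Lp.memLp f).indicator hD).toLp (D.indicator f)

/-- The orthogonal projection of `L²(ℝᴺ)` onto a closed subspace `K`. -/
def projOf {N : ℕ} (K : Submodule ℂ (L2Space N)) (hK : IsClosed (K : Set (L2Space N))) :
    L2Space N → L2Space N :=
  haveI : CompleteSpace K := hK.completeSpace_coe
  fun f => (K.orthogonalProjection f : L2Space N)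

/-- The operator `T_h^{(D)} f = P_S (f + χ_D (h − f))` (single region). -/
def Tsingle {N : ℕ} (K : Submodule ℂ (L2Space N)) (hK : IsClosed (K : Set (L2Space N)))
    {D : Set (EuclideanSpace ℝ (Fin N))} (hD : MeasurableSet D)
    (h f : L2Space N) : L2Space N :=
  projOf K hK (f + chiMul hD (h - f))

/-- The operator `T_h f = ∑ m, ω m • P_S (f + χ_{D m} (h − f))` (multiple weighted regions). -/
def Tmulti {N : ℕ} (K : Submodule ℂ (L2Space N)) (hK : IsClosed (K : Set (L2Space N)))
    {M : ℕ} {D : Fin M → Set (EuclideanSpace ℝ (Fin N))} (hD : ∀ m, MeasurableSet (D m))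
    (ω : Fin M → ℝ) (h f : L2Space N) : L2Space N :=
  ∑ m, ω m • projOf K hK (f + chiMul (hD m) (h - f))

lemma chiMul_sub {N : ℕ} {D : Set (EuclideanSpace ℝ (Fin N))} (hD : MeasurableSet D)
    (a b : L2Space N) : chiMul hD (a - b) = chiMul hD a - chiMul hD b := by
  unfold chiMul
  rw [← MemLp.toLp_sub]
  apply MemLp.toLp_congr
  filter_upwards [Lp.coeFn_sub a b] with x hx
  rw [Pi.sub_apply]
  by_cases hxD : x ∈ D
  · rw [Set.indicator_of_mem hxD, Set.indicator_of_mem hxD, Set.indicator_of_mem hxD, hx,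
      Pi.sub_apply]
  · rw [Set.indicator_of_notMem hxD, Set.indicator_of_notMem hxD, Set.indicator_of_notMem hxD,
      sub_zero]

lemma inner_chiMul_self {N : ℕ} {D : Set (EuclideanSpace ℝ (Fin N))} (hD : MeasurableSet D)
    (u : L2Space N) :
    (inner ℂ u (chiMul hD u) : ℂ) = inner ℂ (chiMul hD u) (chiMul hD u) := by
  rw [MeasureTheory.L2.inner_def, MeasureTheory.L2.inner_def]
  apply integral_congr_ae
  have hx0 : (chiMul hD u : EuclideanSpace ℝ (Fin N) → ℂ) =ᵐ[volume] D.indicator u :=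
    MemLp.coeFn_toLp _
  filter_upwards [hx0] with x hx
  rw [show (chiMul hD u : EuclideanSpace ℝ (Fin N) → ℂ) x = D.indicator u x from hx]
  by_cases hxD : x ∈ D <;> simp [Set.indicator_apply, hxD]

lemma projOf_sub {N : ℕ} (K : Submodule ℂ (L2Space N)) (hK : IsClosed (K : Set (L2Space N)))
    (a b : L2Space N) : projOf K hK (a - b) = projOf K hK a - projOf K hK b := by
  haveI : CompleteSpace K := hK.completeSpace_coe
  show ((K.orthogonalProjection (a - b) : K) : L2Space N) = _
  rw [map_sub]
  rfl

lemma projOf_norm_le {N : ℕ} (K : Submodule ℂ (L2Space N)) (hK : IsClosed (K : Set (L2Space N)))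
    (a : L2Space N) : ‖projOf K hK a‖ ≤ ‖a‖ := by
  haveI : CompleteSpace K := hK.completeSpace_coe
  calc ‖projOf K hK a‖ = ‖K.orthogonalProjection a‖ := rfl
    _ ≤ ‖K.orthogonalProjection‖ * ‖a‖ := (K.orthogonalProjection).le_opNorm a
    _ ≤ 1 * ‖a‖ := by
        exact mul_le_mul_of_nonneg_right (Submodule.orthogonalProjectionOnto_norm_le K) (norm_nonneg a)
    _ = ‖a‖ := one_mul _

lemma inner_projOf {N : ℕ} (K : Submodule ℂ (L2Space N)) (hK : IsClosed (K : Set (L2Space N)))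
    (u a : L2Space N) (hu : u ∈ K) : (inner ℂ u (projOf K hK a) : ℂ) = inner ℂ u a := by
  haveI : CompleteSpace K := hK.completeSpace_coe
  have h1 : (inner ℂ u ((K.orthogonalProjection a : K) : L2Space N) : ℂ)
      = inner ℂ ((K.orthogonalProjection u : K) : L2Space N) a :=
    (Submodule.inner_starProjection_left_eq_right K u a).symm
  have h2 : ((K.orthogonalProjection u : K) : L2Space N) = u :=
    (Submodule.starProjection_eq_self_iff (K := K)).mpr hu
  rw [show projOf K hK a = ((K.orthogonalProjection a : K) : L2Space N) from rfl, h1, h2]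

lemma re_inner_w {N : ℕ} {D : Set (EuclideanSpace ℝ (Fin N))} (hD : MeasurableSet D)
    (u : L2Space N) :
    (inner ℂ u (u - chiMul hD u) : ℂ).re = ‖u - chiMul hD u‖ ^ 2 := by
  have hchi : (inner ℂ u (chiMul hD u) : ℂ).re = ‖chiMul hD u‖ ^ 2 := by
    rw [inner_chiMul_self hD u]
    simpa using (inner_self_eq_norm_sq (𝕜 := ℂ) (chiMul hD u))
  have : (inner ℂ u (u - chiMul hD u) : ℂ).re
      = ‖u‖ ^ 2 - (inner ℂ u (chiMul hD u) : ℂ).re := by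
    rw [inner_sub_right]
    simp [← RCLike.re_to_complex, inner_self_eq_norm_sq (𝕜 := ℂ) u]
    rw [RCLike.re_to_complex, ← Complex.ofReal_pow, Complex.ofReal_re]
  rw [this, hchi, norm_sub_sq (𝕜 := ℂ), RCLike.re_to_complex, hchi]
  ring

/-- For `h ∈ B_S`, measurable sets `D_1, …, D_M` and convex weights
`ω_m ∈ (0,1]` with `∑ ω_m = 1`, the operator `T_h f = ∑ m, ω_m P_S(f + χ_{D_m}(h − f))`
is firmly nonexpansive on `B_S`. -/
theorem firmly_nonexpansive_multi (N : ℕ) (hN : 1 ≤ N)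
    (S : Set (EuclideanSpace ℝ (Fin N))) (hS : IsCompact S)
    (K : Submodule ℂ (L2Space N))
    (hKset : (K : Set (L2Space N)) = {f : L2Space N | IsBandlimited S f})
    (hK : IsClosed (K : Set (L2Space N)))
    (h : L2Space N) (hh : IsBandlimited S h)
    (M : ℕ) (D : Fin M → Set (EuclideanSpace ℝ (Fin N))) (hD : ∀ m, MeasurableSet (D m))
    (ω : Fin M → ℝ) (hω : ∀ m, ω m ∈ Set.Ioc (0 : ℝ) 1) (hωsum : ∑ m, ω m = 1) :
    ∀ f g : L2Space N, IsBandlimited S f → IsBandlimited S g →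
      ‖Tmulti K hK hD ω h f - Tmulti K hK hD ω h g‖ ^ 2 ≤
        (inner ℂ (f - g) (Tmulti K hK hD ω h f - Tmulti K hK hD ω h g) : ℂ).re := by
  intro f g hf hg
  haveI : CompleteSpace K := hK.completeSpace_coe
  have hfK : f ∈ K := by rw [← SetLike.mem_coe, hKset]; exact hf
  have hgK : g ∈ K := by rw [← SetLike.mem_coe, hKset]; exact hg
  set u : L2Space N := f - g with hu_def
  have huK : u ∈ K := K.sub_mem hfK hgK
  set w : Fin M → L2Space N := fun m => u - chiMul (hD m) u with hw
  set v : Fin M → L2Space N := fun m => projOf K hK (w m) with hv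
  have hdiff : Tmulti K hK hD ω h f - Tmulti K hK hD ω h g = ∑ m, ω m • v m := by
    unfold Tmulti
    rw [← Finset.sum_sub_distrib]
    refine Finset.sum_congr rfl fun m _ => ?_
    have e0 : chiMul (hD m) (u - u) = chiMul (hD m) u - chiMul (hD m) u :=
      chiMul_sub _ _ _
    have e1 : chiMul (hD m) (h - f) - chiMul (hD m) (h - g) = -(chiMul (hD m) u) := by
      rw [← chiMul_sub]
      have : h - f - (h - g) = (u - u) - u := by rw [hu_def]; abel
      rw [this, chiMul_sub (hD m) (u - u) u, e0]
      abel
    have key : f + chiMul (hD m) (h - f) - (g + chiMul (hD m) (h - g)) = w m := by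
      calc f + chiMul (hD m) (h - f) - (g + chiMul (hD m) (h - g))
          = (f - g) + (chiMul (hD m) (h - f) - chiMul (hD m) (h - g)) := by abel
        _ = u + -(chiMul (hD m) u) := by rw [e1, ← hu_def]
        _ = w m := by rw [hw]; abel
    rw [← smul_sub, ← projOf_sub, key]
  rw [hdiff]
  -- per-m facts
  have hre : ∀ m, (inner ℂ u (v m) : ℂ).re = ‖w m‖ ^ 2 := fun m => by
    rw [hv, inner_projOf K hK _ _ huK, re_inner_w]
  have hvw : ∀ m, ‖v m‖ ≤ ‖w m‖ := fun m => projOf_norm_le K hK (w m)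
  have hω0 : ∀ m, (0:ℝ) ≤ ω m := fun m => (hω m).1.le
  -- RHS computation
  have hrhs : (inner ℂ u (∑ m, ω m • v m) : ℂ).re = ∑ m, ω m * (inner ℂ u (v m) : ℂ).re := by
    rw [inner_sum, Complex.re_sum]
    refine Finset.sum_congr rfl fun m _ => ?_
    rw [RCLike.real_smul_eq_coe_smul (K := ℂ), inner_smul_right]
    simp [Complex.mul_re]
  -- LHS chain
  have h1 : ‖∑ m, ω m • v m‖ ≤ ∑ m, ω m * ‖v m‖ := by
    refine (norm_sum_le _ _).trans (le_of_eq ?_)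
    refine Finset.sum_congr rfl fun m _ => ?_
    rw [norm_smul, Real.norm_eq_abs, abs_of_nonneg (hω0 m)]
  have h2 : (∑ m, ω m * ‖v m‖) ^ 2 ≤ ∑ m, ω m * ‖v m‖ ^ 2 := by
    have key := Finset.sum_mul_sq_le_sq_mul_sq Finset.univ
      (fun m => Real.sqrt (ω m)) (fun m => Real.sqrt (ω m) * ‖v m‖)
    have e1 : ∀ m : Fin M, Real.sqrt (ω m) * (Real.sqrt (ω m) * ‖v m‖) = ω m * ‖v m‖ := by
      intro m; rw [← mul_assoc, Real.mul_self_sqrt (hω0 m)]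
    have e2 : ∀ m : Fin M, Real.sqrt (ω m) ^ 2 = ω m := fun m => Real.sq_sqrt (hω0 m)
    have e3 : ∀ m : Fin M, (Real.sqrt (ω m) * ‖v m‖) ^ 2 = ω m * ‖v m‖ ^ 2 := by
      intro m; rw [mul_pow, e2]
    calc (∑ m, ω m * ‖v m‖) ^ 2
        = (∑ m, Real.sqrt (ω m) * (Real.sqrt (ω m) * ‖v m‖)) ^ 2 := by
          rw [Finset.sum_congr rfl fun m _ => (e1 m).symm]
      _ ≤ (∑ m, Real.sqrt (ω m) ^ 2) * ∑ m, (Real.sqrt (ω m) * ‖v m‖) ^ 2 := key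
      _ = (∑ m, ω m) * ∑ m, ω m * ‖v m‖ ^ 2 := by
          rw [Finset.sum_congr rfl fun m _ => e2 m, Finset.sum_congr rfl fun m _ => e3 m]
      _ = ∑ m, ω m * ‖v m‖ ^ 2 := by rw [hωsum, one_mul]
  have h3 : ∑ m, ω m * ‖v m‖ ^ 2 ≤ ∑ m, ω m * (inner ℂ u (v m) : ℂ).re := by
    refine Finset.sum_le_sum fun m _ => ?_
    refine mul_le_mul_of_nonneg_left ?_ (hω0 m)
    rw [hre m]
    exact pow_le_pow_left₀ (norm_nonneg _) (hvw m) 2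
  calc ‖∑ m, ω m • v m‖ ^ 2 ≤ (∑ m, ω m * ‖v m‖) ^ 2 :=
        pow_le_pow_left₀ (norm_nonneg _) h1 2
    _ ≤ ∑ m, ω m * ‖v m‖ ^ 2 := h2
    _ ≤ ∑ m, ω m * (inner ℂ u (v m) : ℂ).re := h3
    _ = (inner ℂ u (∑ m, ω m • v m) : ℂ).re := hrhs.symm
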